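/- Let $n \ge 1$, let $G$ be a finite abelian group with $|G| \ge n$, and let $\gamma_1,\ldots,\gamma_n$ be distinct characters of $G$. For each $\varepsilon \in \{-1,1\}^n$ set $P_\varepsilon(x) = \sum_{j=1}^n \varepsilon_j \gamma_j(x)$. Then $$2^{-n}\sum_{\varepsilon \in \{-1,1\}^n} \frac{1}{|G|}\sum_{x \in G} |P_\varepsilon(x)| \ge \sqrt{n/2}.$$ -/

import Mathlib

open Finset

section KhinchinLO
variable {n : ℕ}

noncomputable def cc (b : Bool) : ℂ := if b then 1 else -1


def sg (b : Bool) : ℝ := if b then 1 else -1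

lemma sg_mul_self (b : Bool) : sg b * sg b = 1 := by cases b <;> simp [sg]

def chi (S : Finset (Fin n)) (ε : Fin n → Bool) : ℝ := ∏ i ∈ S, sg (ε i)

lemma sum_chi (S : Finset (Fin n)) :
    ∑ ε : Fin n → Bool, chi S ε = if S = ∅ then (2 ^ n : ℝ) else 0 := by
  have h1 : ∀ ε : Fin n → Bool, chi S ε = ∏ i : Fin n, (if i ∈ S then sg (ε i) else 1) := by
    intro ε
    rw [Finset.prod_ite_mem, Finset.univ_inter, chi]
  simp_rw [h1]
  rw [← Fintype.piFinset_univ,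
    Finset.sum_prod_piFinset (univ : Finset Bool) (fun i b => if i ∈ S then sg b else 1)]
  have h2 : ∀ i : Fin n, (∑ b : Bool, (if i ∈ S then sg b else 1))
      = if i ∈ S then 0 else 2 := by
    intro i
    by_cases h : i ∈ S <;> simp [h, sg]
  simp_rw [h2]
  by_cases hS : S = ∅
  · simp [hS]
  · obtain ⟨i, hi⟩ := Finset.nonempty_iff_ne_empty.2 hS
    rw [if_neg hS]
    exact Finset.prod_eq_zero (Finset.mem_univ i) (by simp [hi])

lemma sum_chi_mul_chi (δ ε : Fin n → Bool) :
    ∑ S : Finset (Fin n), chi S δ * chi S ε = if δ = ε then (2 ^ n : ℝ) else 0 := by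
  have h1 : ∀ S : Finset (Fin n), chi S δ * chi S ε = ∏ i ∈ S, (sg (δ i) * sg (ε i)) := by
    intro S; rw [chi, chi, ← Finset.prod_mul_distrib]
  simp_rw [h1]
  have h2 : ∑ S : Finset (Fin n), ∏ i ∈ S, (sg (δ i) * sg (ε i))
      = ∑ S ∈ (univ : Finset (Fin n)).powerset, (∏ i ∈ S, (sg (δ i) * sg (ε i))) * ∏ i ∈ univ \ S, 1 := by
    rw [Finset.powerset_univ]
    exact Finset.sum_congr rfl fun S _ => by rw [Finset.prod_const_one, mul_one]
  rw [h2, ← Finset.prod_add]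
  by_cases h : δ = ε
  · subst h
    rw [if_pos rfl]
    have : ∀ i : Fin n, sg (δ i) * sg (δ i) + 1 = 2 := by intro i; rw [sg_mul_self]; norm_num
    simp_rw [this]
    simp
  · rw [if_neg h]
    obtain ⟨i, hi⟩ : ∃ i, δ i ≠ ε i := by
      by_contra hc; push_neg at hc; exact h (funext hc)
    refine Finset.prod_eq_zero (Finset.mem_univ i) ?_
    cases hδ : δ i <;> cases hε : ε i <;> simp_all [sg]

lemma inversion (g : (Fin n → Bool) → ℝ) (ε : Fin n → Bool) :
    ∑ S : Finset (Fin n), (∑ δ : Fin n → Bool, g δ * chi S δ) * chi S ε = 2 ^ n * g ε := by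
  simp_rw [Finset.sum_mul, mul_assoc]
  rw [Finset.sum_comm]
  have : ∀ δ : Fin n → Bool, ∑ S : Finset (Fin n), g δ * (chi S δ * chi S ε)
      = g δ * (if δ = ε then (2 ^ n : ℝ) else 0) := by
    intro δ; rw [← Finset.mul_sum, sum_chi_mul_chi]
  simp_rw [this]
  simp [Finset.sum_ite_eq', mul_comm]

lemma parseval (g : (Fin n → Bool) → ℝ) :
    2 ^ n * ∑ ε : Fin n → Bool, g ε ^ 2
      = ∑ S : Finset (Fin n), (∑ δ : Fin n → Bool, g δ * chi S δ) ^ 2 := by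
  have h : ∀ S : Finset (Fin n), (∑ δ : Fin n → Bool, g δ * chi S δ) ^ 2
      = ∑ δ : Fin n → Bool, g δ * chi S δ * (∑ δ' : Fin n → Bool, g δ' * chi S δ') := by
    intro S; rw [sq]; rw [Finset.sum_mul]
  simp_rw [h]
  rw [Finset.sum_comm]
  have h2 : ∀ δ : Fin n → Bool,
      ∑ S : Finset (Fin n), g δ * chi S δ * (∑ δ' : Fin n → Bool, g δ' * chi S δ')
      = g δ * (2 ^ n * g δ) := by
    intro δ
    have : ∀ S : Finset (Fin n), g δ * chi S δ * (∑ δ' : Fin n → Bool, g δ' * chi S δ')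
        = g δ * ((∑ δ' : Fin n → Bool, g δ' * chi S δ') * chi S δ) := by
      intro S; ring
    simp_rw [this]
    rw [← Finset.mul_sum, inversion]
  simp_rw [h2]
  rw [Finset.mul_sum]
  exact Finset.sum_congr rfl fun δ _ => by ring






def flp (i : Fin n) (ε : Fin n → Bool) : Fin n → Bool := Function.update ε i (!ε i)

lemma flp_apply_self (i : Fin n) (ε : Fin n → Bool) : flp i ε i = !ε i := by
  simp [flp]

lemma flp_apply_ne (i j : Fin n) (ε : Fin n → Bool) (h : j ≠ i) : flp i ε j = ε j := by
  simp [flp, Function.update_of_ne h]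

lemma flp_involutive (i : Fin n) : Function.Involutive (flp i) := by
  intro ε
  funext j
  by_cases h : j = i
  · subst h; rw [flp_apply_self, flp_apply_self, Bool.not_not]
  · rw [flp_apply_ne _ _ _ h, flp_apply_ne _ _ _ h]

lemma sum_flp (i : Fin n) (F : (Fin n → Bool) → ℝ) :
    ∑ ε : Fin n → Bool, F (flp i ε) = ∑ ε : Fin n → Bool, F ε :=
  Fintype.sum_bijective (flp i) (flp_involutive i).bijective _ _ (fun _ => rfl)

lemma sg_not (b : Bool) : sg (!b) = -sg b := by cases b <;> simp [sg]

lemma chi_flp (S : Finset (Fin n)) (i : Fin n) (ε : Fin n → Bool) :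
    chi S (flp i ε) = (if i ∈ S then -1 else 1) * chi S ε := by
  by_cases h : i ∈ S
  · rw [if_pos h, chi, chi, ← Finset.mul_prod_erase S _ h, ← Finset.mul_prod_erase S _ h,
      flp_apply_self, sg_not]
    have : ∏ j ∈ S.erase i, sg (flp i ε j) = ∏ j ∈ S.erase i, sg (ε j) :=
      Finset.prod_congr rfl fun j hj => by
        rw [flp_apply_ne _ _ _ (Finset.ne_of_mem_erase hj)]
    rw [this]; ring
  · rw [if_neg h, one_mul, chi, chi]
    exact Finset.prod_congr rfl fun j hj => by
      rw [flp_apply_ne _ _ _ (by rintro rfl; exact h hj)]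

lemma coeff_flp (g : (Fin n → Bool) → ℝ) (S : Finset (Fin n)) (i : Fin n) :
    ∑ δ : Fin n → Bool, g (flp i δ) * chi S δ
      = (if i ∈ S then -1 else 1) * ∑ δ : Fin n → Bool, g δ * chi S δ := by
  have h : ∑ δ : Fin n → Bool, g (flp i δ) * chi S δ
      = ∑ δ : Fin n → Bool, g (flp i (flp i δ)) * chi S (flp i δ) :=
    (sum_flp i (fun δ => g (flp i δ) * chi S δ)).symm
  rw [h]
  simp_rw [flp_involutive i _, chi_flp]
  rw [Finset.mul_sum]
  exact Finset.sum_congr rfl fun δ _ => by ring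

def ngt (ε : Fin n → Bool) : Fin n → Bool := fun i => !ε i

lemma ngt_involutive : Function.Involutive (ngt (n := n)) := by
  intro ε; funext j; simp [ngt]

lemma chi_ngt (S : Finset (Fin n)) (ε : Fin n → Bool) :
    chi S (ngt ε) = (-1) ^ S.card * chi S ε := by
  rw [chi, chi]
  have : ∀ j ∈ S, sg (ngt ε j) = -1 * sg (ε j) := fun j _ => by
    rw [ngt, sg_not]; ring
  rw [Finset.prod_congr rfl this, Finset.prod_mul_distrib, Finset.prod_const]

-- coefficient vanishing for even functions on odd levels
lemma coeff_even_vanish (g : (Fin n → Bool) → ℝ) (hg : ∀ ε, g (ngt ε) = g ε)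
    (S : Finset (Fin n)) (hS : Odd S.card) :
    ∑ δ : Fin n → Bool, g δ * chi S δ = 0 := by
  have h : ∑ δ : Fin n → Bool, g δ * chi S δ
      = ∑ δ : Fin n → Bool, g (ngt δ) * chi S (ngt δ) :=
    (Fintype.sum_bijective ngt ngt_involutive.bijective _ _ (fun _ => rfl)).symm
  have h2 : ∑ δ : Fin n → Bool, g (ngt δ) * chi S (ngt δ)
      = -∑ δ : Fin n → Bool, g δ * chi S δ := by
    simp_rw [hg, chi_ngt, hS.neg_one_pow]
    rw [← Finset.sum_neg_distrib]
    exact Finset.sum_congr rfl fun δ _ => by ring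
  have := h.trans h2
  linarith




theorem main_ineq (f : (Fin n → Bool) → ℝ) (hpos : ∀ ε, 0 ≤ f ε)
    (heven : ∀ ε, f (ngt ε) = f ε)
    (hA : ∀ ε, ((n : ℝ) - 2) * f ε ≤ ∑ i : Fin n, f (flp i ε)) :
    (2 ^ n : ℝ) * ∑ ε : Fin n → Bool, f ε ^ 2 ≤ 2 * (∑ ε : Fin n → Bool, f ε) ^ 2 := by
  -- Step 1
  have step1 : ∑ i : Fin n, ∑ ε : Fin n → Bool, (f ε - f (flp i ε)) * f ε
      ≤ 2 * ∑ ε : Fin n → Bool, f ε ^ 2 := by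
    rw [Finset.sum_comm]
    have hpt : ∀ ε : Fin n → Bool,
        ∑ i : Fin n, (f ε - f (flp i ε)) * f ε ≤ 2 * f ε ^ 2 := by
      intro ε
      have h1 : ∑ i : Fin n, (f ε - f (flp i ε)) * f ε
          = ((n : ℝ) * f ε - ∑ i : Fin n, f (flp i ε)) * f ε := by
        rw [← Finset.sum_mul, Finset.sum_sub_distrib, Finset.sum_const, Finset.card_univ,
          Fintype.card_fin, nsmul_eq_mul]
      rw [h1]
      have h2 := hA ε
      nlinarith [hpos ε, sq_nonneg (f ε)]
    calc ∑ ε : Fin n → Bool, ∑ i : Fin n, (f ε - f (flp i ε)) * f ε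
        ≤ ∑ ε : Fin n → Bool, 2 * f ε ^ 2 := Finset.sum_le_sum fun ε _ => hpt ε
      _ = 2 * ∑ ε : Fin n → Bool, f ε ^ 2 := by rw [← Finset.mul_sum]
  -- Step 2
  have step2 : ∀ i : Fin n, ∑ ε : Fin n → Bool, (f ε - f (flp i ε)) ^ 2
      = 2 * ∑ ε : Fin n → Bool, (f ε - f (flp i ε)) * f ε := by
    intro i
    have hsq : ∑ ε : Fin n → Bool, f (flp i ε) ^ 2 = ∑ ε : Fin n → Bool, f ε ^ 2 :=
      sum_flp i (fun ε => f ε ^ 2)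
    have key : ∀ ε : Fin n → Bool, (f ε - f (flp i ε)) ^ 2 - 2 * ((f ε - f (flp i ε)) * f ε)
        = f (flp i ε) ^ 2 - f ε ^ 2 := by intro ε; ring
    have h0 : ∑ ε : Fin n → Bool,
        ((f ε - f (flp i ε)) ^ 2 - 2 * ((f ε - f (flp i ε)) * f ε)) = 0 := by
      simp_rw [key]
      rw [Finset.sum_sub_distrib, hsq, sub_self]
    rw [Finset.sum_sub_distrib] at h0
    have h1 : ∑ ε : Fin n → Bool, 2 * ((f ε - f (flp i ε)) * f ε)
        = 2 * ∑ ε : Fin n → Bool, (f ε - f (flp i ε)) * f ε := by rw [← Finset.mul_sum]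
    linarith
  -- F
  have step3 : ∀ i : Fin n, (2 ^ n : ℝ) * ∑ ε : Fin n → Bool, (f ε - f (flp i ε)) ^ 2
      = ∑ S : Finset (Fin n),
          (if i ∈ S then 4 * (∑ δ : Fin n → Bool, f δ * chi S δ) ^ 2 else 0) := by
    intro i
    rw [parseval (fun ε => f ε - f (flp i ε))]
    refine Finset.sum_congr rfl fun S _ => ?_
    have hc : ∑ δ : Fin n → Bool, (f δ - f (flp i δ)) * chi S δ
        = (∑ δ : Fin n → Bool, f δ * chi S δ)
          - (if i ∈ S then -1 else 1) * ∑ δ : Fin n → Bool, f δ * chi S δ := by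
      simp_rw [sub_mul]
      rw [Finset.sum_sub_distrib, coeff_flp f S i]
    rw [hc]
    by_cases h : i ∈ S <;> simp [h] <;> ring
  have step4 : ∑ i : Fin n, ∑ S : Finset (Fin n),
        (if i ∈ S then 4 * (∑ δ : Fin n → Bool, f δ * chi S δ) ^ 2 else 0)
      = ∑ S : Finset (Fin n), (S.card : ℝ) * (4 * (∑ δ : Fin n → Bool, f δ * chi S δ) ^ 2) := by
    rw [Finset.sum_comm]
    refine Finset.sum_congr rfl fun S _ => ?_
    rw [Finset.sum_ite_mem, Finset.univ_inter, Finset.sum_const, nsmul_eq_mul]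
  have step5 : ∑ S : Finset (Fin n), (S.card : ℝ) * (4 * (∑ δ : Fin n → Bool, f δ * chi S δ) ^ 2)
      ≥ 8 * ((2 ^ n : ℝ) * (∑ ε : Fin n → Bool, f ε ^ 2) - (∑ ε : Fin n → Bool, f ε) ^ 2) := by
    have hFe : ∑ δ : Fin n → Bool, f δ * chi (∅ : Finset (Fin n)) δ
        = ∑ ε : Fin n → Bool, f ε := by
      simp [chi]
    have hterm : ∀ S : Finset (Fin n),
        (if S = ∅ then (0:ℝ) else 8 * (∑ δ : Fin n → Bool, f δ * chi S δ) ^ 2)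
          ≤ (S.card : ℝ) * (4 * (∑ δ : Fin n → Bool, f δ * chi S δ) ^ 2) := by
      intro S
      by_cases hS : S = ∅
      · rw [if_pos hS]; positivity
      · rw [if_neg hS]
        rcases Nat.even_or_odd S.card with he | ho
        · have h2 : 2 ≤ S.card := by
            rcases Nat.lt_or_ge S.card 2 with h | h
            · exfalso
              interval_cases h' : S.card
              · exact hS (Finset.card_eq_zero.1 h')
              · simp at he
            · exact h
          have h2' : (2:ℝ) ≤ (S.card : ℝ) := by exact_mod_cast h2
          nlinarith [sq_nonneg (∑ δ : Fin n → Bool, f δ * chi S δ)]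
        · rw [coeff_even_vanish f heven S ho]
          simp
    have hsum : ∑ S : Finset (Fin n),
        (if S = ∅ then (0:ℝ) else 8 * (∑ δ : Fin n → Bool, f δ * chi S δ) ^ 2)
        = 8 * ((2 ^ n : ℝ) * ∑ ε : Fin n → Bool, f ε ^ 2) - 8 * (∑ ε : Fin n → Bool, f ε) ^ 2 := by
      have hsplit : ∀ S : Finset (Fin n),
          (if S = ∅ then (0:ℝ) else 8 * (∑ δ : Fin n → Bool, f δ * chi S δ) ^ 2)
          = 8 * (∑ δ : Fin n → Bool, f δ * chi S δ) ^ 2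
            - (if S = ∅ then 8 * (∑ δ : Fin n → Bool, f δ * chi S δ) ^ 2 else 0) := by
        intro S; by_cases h : S = ∅ <;> simp [h]
      simp_rw [hsplit]
      rw [Finset.sum_sub_distrib, ← Finset.mul_sum, ← parseval f,
        Finset.sum_ite_eq' (univ : Finset (Finset (Fin n))) ∅
          (fun S => 8 * (∑ δ : Fin n → Bool, f δ * chi S δ) ^ 2)]
      simp only [Finset.mem_univ, if_pos, hFe]
    calc ∑ S : Finset (Fin n), (S.card : ℝ) * (4 * (∑ δ : Fin n → Bool, f δ * chi S δ) ^ 2)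
        ≥ ∑ S : Finset (Fin n),
            (if S = ∅ then (0:ℝ) else 8 * (∑ δ : Fin n → Bool, f δ * chi S δ) ^ 2) :=
          Finset.sum_le_sum fun S _ => hterm S
      _ = 8 * ((2 ^ n : ℝ) * ∑ ε : Fin n → Bool, f ε ^ 2) - 8 * (∑ ε : Fin n → Bool, f ε) ^ 2 :=
          hsum
      _ = 8 * ((2 ^ n : ℝ) * (∑ ε : Fin n → Bool, f ε ^ 2) - (∑ ε : Fin n → Bool, f ε) ^ 2) := by
          ring
  -- assemble
  have h2n : (0:ℝ) < 2 ^ n := by positivity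
  have chain : 8 * ((2 ^ n : ℝ) * (∑ ε : Fin n → Bool, f ε ^ 2) - (∑ ε : Fin n → Bool, f ε) ^ 2)
      ≤ (2:ℝ) ^ n * (2 * (2 * ∑ ε : Fin n → Bool, f ε ^ 2)) := by
    calc 8 * ((2 ^ n : ℝ) * (∑ ε : Fin n → Bool, f ε ^ 2) - (∑ ε : Fin n → Bool, f ε) ^ 2)
        ≤ ∑ S : Finset (Fin n), (S.card : ℝ) * (4 * (∑ δ : Fin n → Bool, f δ * chi S δ) ^ 2) :=
          step5
      _ = ∑ i : Fin n, ∑ S : Finset (Fin n),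
            (if i ∈ S then 4 * (∑ δ : Fin n → Bool, f δ * chi S δ) ^ 2 else 0) := step4.symm
      _ = ∑ i : Fin n, (2 ^ n : ℝ) * ∑ ε : Fin n → Bool, (f ε - f (flp i ε)) ^ 2 :=
          Finset.sum_congr rfl fun i _ => (step3 i).symm
      _ = (2 ^ n : ℝ) * ∑ i : Fin n, 2 * ∑ ε : Fin n → Bool, (f ε - f (flp i ε)) * f ε := by
          rw [Finset.mul_sum]
          exact Finset.sum_congr rfl fun i _ => by rw [step2 i]
      _ = (2 ^ n : ℝ) * (2 * ∑ i : Fin n, ∑ ε : Fin n → Bool, (f ε - f (flp i ε)) * f ε) := by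
          rw [← Finset.mul_sum]
      _ ≤ (2 ^ n : ℝ) * (2 * (2 * ∑ ε : Fin n → Bool, f ε ^ 2)) := by
          nlinarith [step1]
  nlinarith [chain]




lemma cc_eq_sg (b : Bool) : cc b = ((sg b : ℝ) : ℂ) := by cases b <;> simp [cc, sg]

lemma conj_cc (b : Bool) : (starRingEnd ℂ) (cc b) = cc b := by cases b <;> simp [cc]

lemma cc_mul_self (b : Bool) : cc b * cc b = 1 := by cases b <;> simp [cc]

lemma sum_cc_mul_cc (j k : Fin n) :
    ∑ ε : Fin n → Bool, cc (ε j) * cc (ε k) = if j = k then (2 ^ n : ℂ) else 0 := by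
  by_cases h : j = k
  · subst h
    simp_rw [cc_mul_self]
    simp
  · rw [if_neg h]
    have hpair : ∀ ε : Fin n → Bool, cc (ε j) * cc (ε k) = ((chi {j, k} ε : ℝ) : ℂ) := by
      intro ε
      rw [chi, Finset.prod_pair h, cc_eq_sg, cc_eq_sg]
      push_cast
      ring
    simp_rw [hpair]
    rw [← Complex.ofReal_sum]
    rw [sum_chi ({j, k} : Finset (Fin n))]
    have : ({j, k} : Finset (Fin n)) ≠ ∅ := by
      simp [Finset.insert_ne_empty]
    rw [if_neg this]
    simp

lemma norm_sq_sum (a : Fin n → ℂ) :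
    ∑ ε : Fin n → Bool, ‖∑ j, cc (ε j) * a j‖ ^ 2 = 2 ^ n * ∑ j, ‖a j‖ ^ 2 := by
  have hnorm : ∀ z : ℂ, ‖z‖ ^ 2 = (z * (starRingEnd ℂ) z).re := by
    intro z
    rw [Complex.mul_conj]
    rw [Complex.sq_norm, Complex.ofReal_re]
  have hexp : ∑ ε : Fin n → Bool,
      (∑ j, cc (ε j) * a j) * (starRingEnd ℂ) (∑ j, cc (ε j) * a j)
      = (2 ^ n : ℂ) * ∑ j, a j * (starRingEnd ℂ) (a j) := by
    have h1 : ∀ ε : Fin n → Bool,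
        (∑ j, cc (ε j) * a j) * (starRingEnd ℂ) (∑ j, cc (ε j) * a j)
        = ∑ j, ∑ k, cc (ε j) * cc (ε k) * (a j * (starRingEnd ℂ) (a k)) := by
      intro ε
      rw [map_sum, Finset.sum_mul_sum]
      refine Finset.sum_congr rfl fun j _ => Finset.sum_congr rfl fun k _ => ?_
      rw [map_mul, conj_cc]
      ring
    simp_rw [h1]
    rw [Finset.sum_comm]
    have h2 : ∀ j : Fin n, ∑ ε : Fin n → Bool, ∑ k, cc (ε j) * cc (ε k) * (a j * (starRingEnd ℂ) (a k))
        = (2 ^ n : ℂ) * (a j * (starRingEnd ℂ) (a j)) := by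
      intro j
      rw [Finset.sum_comm]
      have h3 : ∀ k : Fin n, ∑ ε : Fin n → Bool, cc (ε j) * cc (ε k) * (a j * (starRingEnd ℂ) (a k))
          = (if j = k then (2 ^ n : ℂ) else 0) * (a j * (starRingEnd ℂ) (a k)) := by
        intro k
        rw [← Finset.sum_mul, sum_cc_mul_cc]
      simp_rw [h3, ite_mul, zero_mul]
      simp [Finset.sum_ite_eq]
    simp_rw [h2]
    rw [← Finset.mul_sum]
  have l1 : ∑ ε : Fin n → Bool, ‖∑ j, cc (ε j) * a j‖ ^ 2
      = (∑ ε : Fin n → Bool,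
          (∑ j, cc (ε j) * a j) * (starRingEnd ℂ) (∑ j, cc (ε j) * a j)).re := by
    rw [Complex.re_sum]
    exact Finset.sum_congr rfl fun ε _ => hnorm _
  rw [l1, hexp]
  have h4 : ∀ j : Fin n, a j * (starRingEnd ℂ) (a j) = ((‖a j‖ ^ 2 : ℝ) : ℂ) := by
    intro j
    rw [Complex.mul_conj, Complex.sq_norm]
  simp_rw [h4]
  rw [← Complex.ofReal_sum]
  norm_cast



lemma cc_not (b : Bool) : cc (!b) = -cc b := by cases b <;> simp [cc]

theorem khinchin (a : Fin n → ℂ) :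
    Real.sqrt ((∑ j, ‖a j‖ ^ 2) / 2)
      ≤ (2 ^ n : ℝ)⁻¹ * ∑ ε : Fin n → Bool, ‖∑ j, cc (ε j) * a j‖ := by
  set f : (Fin n → Bool) → ℝ := fun ε => ‖∑ j, cc (ε j) * a j‖ with hf
  have hpos : ∀ ε, 0 ≤ f ε := fun ε => norm_nonneg _
  have heven : ∀ ε, f (ngt ε) = f ε := by
    intro ε
    have : ∑ j, cc (ngt ε j) * a j = -∑ j, cc (ε j) * a j := by
      rw [← Finset.sum_neg_distrib]
      refine Finset.sum_congr rfl fun j _ => ?_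
      rw [ngt, cc_not]
      ring
    rw [hf]
    simp only [this, norm_neg]
  have hA : ∀ ε, ((n : ℝ) - 2) * f ε ≤ ∑ i : Fin n, f (flp i ε) := by
    intro ε
    have key : ∀ i : Fin n, (∑ j, cc (flp i ε j) * a j)
        = (∑ j, cc (ε j) * a j) - 2 * (cc (ε i) * a i) := by
      intro i
      have hdiff : ∑ j, (cc (flp i ε j) * a j - cc (ε j) * a j)
          = -2 * (cc (ε i) * a i) := by
        rw [Finset.sum_eq_single i]
        · rw [flp_apply_self, cc_not]; ring
        · intro j _ hj
          rw [flp_apply_ne i j ε hj, sub_self]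
        · intro h; exact absurd (Finset.mem_univ i) h
      have := hdiff
      rw [Finset.sum_sub_distrib] at this
      linear_combination this
    have hsum : ∑ i : Fin n, (∑ j, cc (flp i ε j) * a j)
        = ((n : ℂ) - 2) * ∑ j, cc (ε j) * a j := by
      simp_rw [key]
      rw [Finset.sum_sub_distrib, Finset.sum_const, Finset.card_univ, Fintype.card_fin,
        nsmul_eq_mul]
      have : ∑ i : Fin n, 2 * (cc (ε i) * a i) = 2 * ∑ j, cc (ε j) * a j := by
        rw [← Finset.mul_sum]
      rw [this]
      ring
    have hnorm : ((n : ℝ) - 2) * f ε ≤ ‖∑ i : Fin n, (∑ j, cc (flp i ε j) * a j)‖ := by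
      rw [hsum, norm_mul]
      have h1 : ‖((n : ℂ) - 2)‖ = |(n : ℝ) - 2| := by
        have : ((n : ℂ) - 2) = (((n : ℝ) - 2 : ℝ) : ℂ) := by push_cast; ring
        rw [this, Complex.norm_real, Real.norm_eq_abs]
      rw [h1]
      have h2 : (n : ℝ) - 2 ≤ |(n : ℝ) - 2| := le_abs_self _
      have h3 : (0:ℝ) ≤ f ε := hpos ε
      rw [hf]
      nlinarith [abs_nonneg ((n : ℝ) - 2)]
    calc ((n : ℝ) - 2) * f ε ≤ ‖∑ i : Fin n, (∑ j, cc (flp i ε j) * a j)‖ := hnorm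
      _ ≤ ∑ i : Fin n, ‖∑ j, cc (flp i ε j) * a j‖ := norm_sum_le _ _
      _ = ∑ i : Fin n, f (flp i ε) := rfl
  have hmain := main_ineq f hpos heven hA
  rw [show ∑ ε : Fin n → Bool, f ε ^ 2 = ∑ ε : Fin n → Bool, ‖∑ j, cc (ε j) * a j‖ ^ 2 from rfl,
    norm_sq_sum a] at hmain
  have h2n : (0:ℝ) < 2 ^ n := by positivity
  have hT1 : 0 ≤ ∑ ε : Fin n → Bool, f ε := Finset.sum_nonneg fun ε _ => hpos ε
  have hsq : (∑ j, ‖a j‖ ^ 2) / 2 ≤ ((2 ^ n : ℝ)⁻¹ * ∑ ε : Fin n → Bool, f ε) ^ 2 := by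
    rw [mul_pow]
    rw [inv_pow]
    rw [div_le_iff₀ (by norm_num : (0:ℝ) < 2)]
    rw [← sub_nonneg]
    have expand : ((2 ^ n : ℝ) ^ 2)⁻¹ * (∑ ε : Fin n → Bool, f ε) ^ 2 * 2 - ∑ j, ‖a j‖ ^ 2
        = ((2 ^ n : ℝ) ^ 2)⁻¹ * (2 * (∑ ε : Fin n → Bool, f ε) ^ 2
            - (2 ^ n : ℝ) * ((2 ^ n : ℝ) * ∑ j, ‖a j‖ ^ 2)) := by
      field_simp
    rw [expand]
    have : (0:ℝ) ≤ 2 * (∑ ε : Fin n → Bool, f ε) ^ 2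
        - (2 ^ n : ℝ) * ((2 ^ n : ℝ) * ∑ j, ‖a j‖ ^ 2) := by linarith
    positivity
  calc Real.sqrt ((∑ j, ‖a j‖ ^ 2) / 2)
      ≤ Real.sqrt (((2 ^ n : ℝ)⁻¹ * ∑ ε : Fin n → Bool, f ε) ^ 2) := Real.sqrt_le_sqrt hsq
    _ = (2 ^ n : ℝ)⁻¹ * ∑ ε : Fin n → Bool, f ε := Real.sqrt_sq (by positivity)

end KhinchinLO



theorem stmt17 {G : Type*} [AddCommGroup G] [Fintype G]
    (n : ℕ) (hn : 1 ≤ n) (hcard : n ≤ Fintype.card G)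
    (γ : Fin n → AddChar G ℂ) (hγ : Function.Injective γ) :
    Real.sqrt (n / 2) ≤ (2 ^ n : ℝ)⁻¹ * ∑ ε : Fin n → Bool,
      (Fintype.card G : ℝ)⁻¹ * ∑ x : G, ‖∑ j, (if ε j then (1 : ℂ) else -1) * γ j x‖ := by
  have hcc : ∀ (ε : Fin n → Bool) (j : Fin n) (x : G),
      (if ε j then (1 : ℂ) else -1) * γ j x = cc (ε j) * γ j x := fun ε j x => rfl
  have per_x : ∀ x : G, Real.sqrt ((n : ℝ) / 2)
      ≤ (2 ^ n : ℝ)⁻¹ * ∑ ε : Fin n → Bool, ‖∑ j, cc (ε j) * γ j x‖ := by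
    intro x
    have h := khinchin (fun j => γ j x)
    have hone : ∑ j : Fin n, ‖γ j x‖ ^ 2 = (n : ℝ) := by
      have : ∀ j : Fin n, ‖γ j x‖ ^ 2 = 1 := by
        intro j
        rw [AddChar.norm_apply, one_pow]
      simp_rw [this]
      simp
    rw [hone] at h
    exact h
  have hG : (0:ℝ) < (Fintype.card G : ℝ) := by
    have : 0 < Fintype.card G := Fintype.card_pos
    exact_mod_cast this
  simp_rw [hcc]
  have swap : (2 ^ n : ℝ)⁻¹ * ∑ ε : Fin n → Bool,
      (Fintype.card G : ℝ)⁻¹ * ∑ x : G, ‖∑ j, cc (ε j) * γ j x‖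
      = (Fintype.card G : ℝ)⁻¹ * ∑ x : G,
        ((2 ^ n : ℝ)⁻¹ * ∑ ε : Fin n → Bool, ‖∑ j, cc (ε j) * γ j x‖) := by
    rw [← Finset.mul_sum, ← Finset.mul_sum]
    rw [Finset.sum_comm]
    ring
  rw [swap]
  have hbound : (Fintype.card G : ℝ) * Real.sqrt ((n : ℝ) / 2)
      ≤ ∑ x : G, ((2 ^ n : ℝ)⁻¹ * ∑ ε : Fin n → Bool, ‖∑ j, cc (ε j) * γ j x‖) := by
    calc (Fintype.card G : ℝ) * Real.sqrt ((n : ℝ) / 2)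
        = ∑ _x : G, Real.sqrt ((n : ℝ) / 2) := by
          rw [Finset.sum_const, Finset.card_univ, nsmul_eq_mul]
      _ ≤ _ := Finset.sum_le_sum fun x _ => per_x x
  calc Real.sqrt ((n : ℝ) / 2)
      = (Fintype.card G : ℝ)⁻¹ * ((Fintype.card G : ℝ) * Real.sqrt ((n : ℝ) / 2)) := by
        field_simp
    _ ≤ (Fintype.card G : ℝ)⁻¹ * ∑ x : G,
        ((2 ^ n : ℝ)⁻¹ * ∑ ε : Fin n → Bool, ‖∑ j, cc (ε j) * γ j x‖) := by
        have := hbound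
        have hinv : (0:ℝ) ≤ (Fintype.card G : ℝ)⁻¹ := by positivity
        nlinarith
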